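/- arXiv:1702.05892 — 2 statements merged into one kernel-verified Lean document; each statement's English description precedes it below -/
import Mathlib

section
/- (Uniform entropy bound for the tail sums.) In the model below, the tail random variables X_N = Σ_{k=N+1}^{∞} a_k ε_{k,0} satisfy sup_{N ≥ 1} D(X_N) < ∞; that is, there exists a constant A > 0, depending only on κ, δ and the law of ε, such that D(X_N) ≤ A for all N. -/
open MeasureTheory ProbabilityTheory Filter
open scoped ENNReal NNReal

/-- Differential entropy (base 2) of a probability measure `μ` on `ℝ` with density
`p = dμ/dx`: `h(μ) = −∫ p log₂ p`. -/
noncomputable def diffEnt (μ : Measure ℝ) : ℝ :=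
  - ∫ x, (μ.rnDeriv MeasureTheory.volume x).toReal *
      Real.logb 2 (μ.rnDeriv MeasureTheory.volume x).toReal

/-- The entropy gap `D(X) = h(W) − h(X)` where `W` is Gaussian with the same mean and
variance as `X`; here `h(W) = ½ log₂(2πe·Var X)` and `μ` is the law of `X`. -/
noncomputable def entGap (μ : Measure ℝ) : ℝ :=
  Real.logb 2 (2 * Real.pi * Real.exp 1 * variance id μ) / 2 - diffEnt μ

/-- `v_N = n_1 n_2 ⋯ n_N` (with `v_0 = 1`). -/
def vseq (n : ℕ → ℕ) (N : ℕ) : ℕ := ∏ i ∈ Finset.range N, n (i + 1)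

/-- The tail sum `X_N = Σ_{k=N+1}^∞ a_k ε_{k,0}`. -/
noncomputable def Xtail {Ω : Type*} (a : ℕ → ℝ) (ε : ℕ → ℕ → Ω → ℝ) (N : ℕ) (ω : Ω) : ℝ :=
  ∑' k : ℕ, a (N + 1 + k) * ε (N + 1 + k) 0 ω

/-! ### Auxiliary lemmas -/

lemma rnDeriv_le_const_of_bound (ν : Measure ℝ) [IsFiniteMeasure ν] (c : ℝ≥0∞)
    (h : ∀ s : Set ℝ, MeasurableSet s → ν s ≤ c * MeasureTheory.volume s) :
    ν.rnDeriv MeasureTheory.volume ≤ᵐ[MeasureTheory.volume] fun _ => c := by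
  refine ae_le_of_forall_setLIntegral_le_of_sigmaFinite (ν.measurable_rnDeriv volume)
    (fun s hs _ ↦ ?_)
  rw [setLIntegral_const]
  exact (Measure.setLIntegral_rnDeriv_le s).trans (h s hs)

lemma abs_mul_logb_le {C : ℝ} (hC : 1 ≤ C) {t : ℝ} (ht : 0 ≤ t) (htC : t ≤ C) :
    |t * Real.logb 2 t| ≤ 1 / Real.log 2 + C * Real.logb 2 C := by
  have hlog2 : (0:ℝ) < Real.log 2 := Real.log_pos one_lt_two
  have hCb : 0 ≤ C * Real.logb 2 C :=
    mul_nonneg (by linarith) (Real.logb_nonneg one_lt_two hC)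
  rcases eq_or_lt_of_le ht with h0 | ht0
  · simp [← h0]; positivity
  rcases le_or_gt t 1 with h1 | h1
  · have := Real.abs_log_mul_self_lt t ht0 h1
    have : |t * Real.logb 2 t| ≤ 1 / Real.log 2 := by
      rw [Real.logb, mul_div_assoc' , abs_div, abs_of_pos hlog2, div_le_div_iff_of_pos_right hlog2]
      rw [mul_comm] at this
      linarith [this]
    linarith
  · have hlb : 0 ≤ Real.logb 2 t := Real.logb_nonneg one_lt_two h1.le
    have h2 : t * Real.logb 2 t ≤ C * Real.logb 2 C := by
      have := Real.logb_le_logb_of_le (one_lt_two) ht0 htC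
      have h3 : t * Real.logb 2 t ≤ C * Real.logb 2 t :=
        mul_le_mul_of_nonneg_right htC hlb
      have h4 : C * Real.logb 2 t ≤ C * Real.logb 2 C :=
        mul_le_mul_of_nonneg_left this (by linarith)
      linarith
    rw [abs_of_nonneg (mul_nonneg ht hlb)]
    · linarith [one_div_pos.mpr hlog2]

lemma diffEnt_lower (ν : Measure ℝ) [IsProbabilityMeasure ν] (C : ℝ) (hC : 1 ≤ C)
    (hac : ν ≪ MeasureTheory.volume)
    (hub : ν.rnDeriv MeasureTheory.volume ≤ᵐ[MeasureTheory.volume] fun _ => ENNReal.ofReal C)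
    (hsupp : ν (Set.Icc (-1:ℝ) 1)ᶜ = 0) :
    - Real.logb 2 C ≤ diffEnt ν := by
  set p : ℝ → ℝ := fun x => (ν.rnDeriv volume x).toReal with hp
  have hpm : Measurable p := (ν.measurable_rnDeriv volume).ennreal_toReal
  have hpnn : ∀ x, 0 ≤ p x := fun x => ENNReal.toReal_nonneg
  have hubr : ∀ᵐ x ∂volume, p x ≤ C := by
    filter_upwards [hub] with x hx
    exact ENNReal.toReal_le_of_le_ofReal (by linarith) hx
  have hint_p : Integrable p volume := Measure.integrable_toReal_rnDeriv
  have hp1 : ∫ x, p x = 1 := by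
    rw [Measure.integral_toReal_rnDeriv hac]
    simp
  have hmeasIcc : MeasurableSet ((Set.Icc (-1:ℝ) 1)ᶜ) := (measurableSet_Icc).compl
  have hzero : ∀ᵐ x ∂volume, x ∈ (Set.Icc (-1:ℝ) 1)ᶜ → p x = 0 := by
    have h0 : ∫⁻ x in (Set.Icc (-1:ℝ) 1)ᶜ, ν.rnDeriv volume x ∂volume = 0 := by
      rw [Measure.setLIntegral_rnDeriv hac]
      exact hsupp
    have h1 := (setLIntegral_eq_zero_iff hmeasIcc (ν.measurable_rnDeriv volume)).mp h0
    filter_upwards [h1] with x hx hxmem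
    simp [hp, hx hxmem]
  set g : ℝ → ℝ := fun x => p x * Real.logb 2 (p x) with hg
  have hgm : Measurable g := by
    apply hpm.mul
    simp only [Real.logb]
    exact (Real.measurable_log.comp hpm).div_const _
  set K : ℝ := 1 / Real.log 2 + C * Real.logb 2 C with hK
  have hgbd : ∀ᵐ x ∂volume, ‖g x‖ ≤ K := by
    filter_upwards [hubr] with x hx
    exact abs_mul_logb_le hC (hpnn x) hx
  have hgeq : g =ᵐ[volume] (Set.Icc (-1:ℝ) 1).indicator g := by
    filter_upwards [hzero] with x hx
    by_cases hmem : x ∈ Set.Icc (-1:ℝ) 1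
    · rw [Set.indicator_of_mem hmem]
    · rw [Set.indicator_of_notMem hmem, hg]
      simp [hx hmem]
  have hint_g : Integrable g volume := by
    rw [integrable_congr hgeq]
    rw [integrable_indicator_iff measurableSet_Icc]
    refine Integrable.mono' (integrable_const K) hgm.aestronglyMeasurable ?_
    exact ae_restrict_of_ae hgbd
  have hcomp : g ≤ᵐ[volume] fun x => p x * Real.logb 2 C := by
    filter_upwards [hubr] with x hx
    rcases eq_or_lt_of_le (hpnn x) with h0 | h0
    · simp [hg, ← h0]
    · exact mul_le_mul_of_nonneg_left
        (Real.logb_le_logb_of_le one_lt_two h0 hx) (hpnn x)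
  have hint2 : Integrable (fun x => p x * Real.logb 2 C) volume := hint_p.mul_const _
  have hle : ∫ x, g x ≤ ∫ x, p x * Real.logb 2 C := integral_mono_ae hint_g hint2 hcomp
  rw [integral_mul_const, hp1, one_mul] at hle
  have hde : diffEnt ν = - ∫ x, g x := rfl
  rw [hde]
  linarith

lemma variance_id_pos (ν : Measure ℝ) [IsProbabilityMeasure ν] (c : ℝ) (hc : 1 ≤ c)
    (hb : ∀ s : Set ℝ, MeasurableSet s → ν s ≤ ENNReal.ofReal c * MeasureTheory.volume s)
    (hsupp : ∀ᵐ x ∂ν, x ∈ Set.Icc (-1:ℝ) 1) : 0 < variance id ν := by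
  have hc0 : 0 < c := by linarith
  have hml : MemLp id 2 ν := by
    refine MemLp.of_bound aestronglyMeasurable_id 1 ?_
    filter_upwards [hsupp] with x hx
    rw [Real.norm_eq_abs, abs_le]
    exact ⟨hx.1, hx.2⟩
  set m : ℝ := ∫ x, id x ∂ν with hm
  set t : ℝ := 1 / (4 * c) with ht
  have ht0 : 0 < t := by positivity
  set S : Set ℝ := (Set.Ioo (m - t) (m + t))ᶜ with hS
  have hSm : MeasurableSet S := measurableSet_Ioo.compl
  have h1 : ν (Set.Ioo (m - t) (m + t)) ≤ ENNReal.ofReal (1/2) := by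
    refine (hb _ measurableSet_Ioo).trans ?_
    rw [Real.volume_Ioo, ← ENNReal.ofReal_mul hc0.le]
    apply ENNReal.ofReal_le_ofReal
    have : m + t - (m - t) = 2 * t := by ring
    rw [this, ht]
    have hcne : c ≠ 0 := ne_of_gt hc0
    have heq : c * (2 * (1 / (4 * c))) = 1/2 := by field_simp; ring
    rw [heq]
  have h2 : ENNReal.ofReal (1/2) ≤ ν S := by
    rw [hS, measure_compl measurableSet_Ioo (measure_ne_top _ _), measure_univ]
    calc ENNReal.ofReal (1/2) = 1 - ENNReal.ofReal (1/2) := by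
          rw [← ENNReal.ofReal_one, ← ENNReal.ofReal_sub _ (by norm_num)]
          norm_num
      _ ≤ 1 - ν (Set.Ioo (m - t) (m + t)) := tsub_le_tsub_left h1 1
  have h2' : (1:ℝ)/2 ≤ (ν S).toReal := by
    have := ENNReal.toReal_mono (measure_ne_top ν S) h2
    rwa [ENNReal.toReal_ofReal (by norm_num)] at this
  have hvar : variance id ν = ∫ x, (x - m) ^ 2 ∂ν := by
    rw [variance_eq_integral aemeasurable_id]
    congr 1
  have hintsq : Integrable (fun x => (x - m)^2) ν := by
    have := (hml.sub (memLp_const m)).integrable_sq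
    simpa [sq] using this
  have hlow : ∫ x in S, t ^ 2 ∂ν ≤ ∫ x in S, (x - m) ^ 2 ∂ν := by
    refine setIntegral_mono_on (integrableOn_const (measure_ne_top _ _))
      hintsq.integrableOn hSm ?_
    intro x hx
    rw [hS, Set.mem_compl_iff, Set.mem_Ioo, not_and_or] at hx
    rcases hx with hx | hx
    · push_neg at hx; nlinarith
    · push_neg at hx; nlinarith
  have hfull : ∫ x in S, (x - m) ^ 2 ∂ν ≤ ∫ x, (x - m) ^ 2 ∂ν := by
    refine setIntegral_le_integral hintsq ?_
    filter_upwards with x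
    positivity
  have hconst : ∫ x in S, t ^ 2 ∂ν = (ν S).toReal * t ^ 2 := by
    rw [setIntegral_const, smul_eq_mul, measureReal_def]
  have hfin : (1/2 : ℝ) * t^2 ≤ variance id ν := by
    rw [hvar]
    calc (1/2 : ℝ) * t^2 ≤ (ν S).toReal * t^2 := by nlinarith
      _ = ∫ x in S, t ^ 2 ∂ν := hconst.symm
      _ ≤ ∫ x in S, (x - m) ^ 2 ∂ν := hlow
      _ ≤ ∫ x, (x - m) ^ 2 ∂ν := hfull
  nlinarith

lemma indepFun_of_measurable_biSup {Ω ι : Type*} [MeasureSpace Ω]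
    [IsProbabilityMeasure (ℙ : Measure Ω)]
    (f : ι → Ω → ℝ) (hf : ∀ i, Measurable (f i))
    (hindep : iIndepFun f ℙ) (i₀ : ι) (g : Ω → ℝ)
    (hg : @Measurable Ω ℝ (⨆ i ∈ ({i₀}ᶜ : Set ι),
        MeasurableSpace.comap (f i) inferInstance) _ g) :
    IndepFun (f i₀) g ℙ := by
  have h1 := ProbabilityTheory.indep_biSup_compl (fun i => (hf i).comap_le) hindep {i₀}
  have h2 : (⨆ i ∈ ({i₀} : Set ι), MeasurableSpace.comap (f i) inferInstance)
      = MeasurableSpace.comap (f i₀) inferInstance := by simp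
  rw [h2] at h1
  exact ProbabilityTheory.indep_of_indep_of_le_right h1 (measurable_iff_comap_le.1 hg)

lemma map_add_bound {Ω : Type*} [MeasureSpace Ω] [IsProbabilityMeasure (ℙ : Measure Ω)]
    (Y R : Ω → ℝ) (hYm : Measurable Y) (hRm : Measurable R) (hI : IndepFun Y R ℙ)
    (c : ℝ≥0∞)
    (hY : ∀ s : Set ℝ, MeasurableSet s → Measure.map Y ℙ s ≤ c * MeasureTheory.volume s)
    (s : Set ℝ) (hs : MeasurableSet s) :
    Measure.map (fun ω => Y ω + R ω) ℙ s ≤ c * MeasureTheory.volume s := by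
  have hpair : Measure.map (fun ω => (R ω, Y ω)) ℙ = (Measure.map R ℙ).prod (Measure.map Y ℙ) :=
    (indepFun_iff_map_prod_eq_prod_map_map hRm.aemeasurable hYm.aemeasurable).1 hI.symm
  have hcomp : (fun ω => Y ω + R ω) = (fun p : ℝ × ℝ => p.2 + p.1) ∘ (fun ω => (R ω, Y ω)) := rfl
  have hadd : Measurable (fun p : ℝ × ℝ => p.2 + p.1) := measurable_snd.add measurable_fst
  rw [hcomp, ← Measure.map_map hadd (hRm.prodMk hYm), hpair,
    Measure.map_apply hadd hs, Measure.prod_apply (hadd hs)]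
  have hslice : ∀ x : ℝ, (Measure.map Y ℙ) (Prod.mk x ⁻¹' ((fun p : ℝ × ℝ => p.2 + p.1) ⁻¹' s))
      ≤ c * MeasureTheory.volume s := by
    intro x
    have hset : (Prod.mk x ⁻¹' ((fun p : ℝ × ℝ => p.2 + p.1) ⁻¹' s))
        = (fun y : ℝ => y + x) ⁻¹' s := rfl
    rw [hset, ← measure_preimage_add_right MeasureTheory.volume x s]
    exact hY _ ((measurable_add_const x) hs)
  calc ∫⁻ x, (Measure.map Y ℙ) (Prod.mk x ⁻¹' ((fun p : ℝ × ℝ => p.2 + p.1) ⁻¹' s))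
        ∂(Measure.map R ℙ)
      ≤ ∫⁻ _, c * MeasureTheory.volume s ∂(Measure.map R ℙ) := lintegral_mono hslice
    _ = c * MeasureTheory.volume s := by
        have : IsProbabilityMeasure (Measure.map R ℙ) := Measure.isProbabilityMeasure_map hRm.aemeasurable
        simp

lemma map_scaled_density_bound {Ω : Type*} [MeasureSpace Ω]
    (e : Ω → ℝ) (hem : Measurable e) (με : Measure ℝ) (hlaw : Measure.map e ℙ = με)
    (f : ℝ → ℝ≥0∞) (M : ℝ≥0∞) (hfM : ∀ x, f x ≤ M)
    (hμf : με = MeasureTheory.volume.withDensity f)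
    (a' : ℝ) (ha' : 0 < a') (s : Set ℝ) (hs : MeasurableSet s) :
    Measure.map (fun ω => a' * e ω) ℙ s ≤ (M * ENNReal.ofReal a'⁻¹) * MeasureTheory.volume s := by
  have hcm : Measurable (fun x : ℝ => a' * x) := measurable_const_mul a'
  have h1 : Measure.map (fun ω => a' * e ω) ℙ = Measure.map (fun x => a' * x) με := by
    rw [← hlaw, Measure.map_map hcm hem]
    rfl
  have hpre : MeasurableSet ((fun x : ℝ => a' * x) ⁻¹' s) := hcm hs
  rw [h1, Measure.map_apply hcm hs, hμf, withDensity_apply _ hpre]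
  calc ∫⁻ x in (fun x : ℝ => a' * x) ⁻¹' s, f x
      ≤ ∫⁻ _ in (fun x : ℝ => a' * x) ⁻¹' s, M := lintegral_mono fun x => hfM x
    _ = M * MeasureTheory.volume ((fun x : ℝ => a' * x) ⁻¹' s) := by
        rw [setLIntegral_const]
    _ = M * (ENNReal.ofReal |a'⁻¹| * MeasureTheory.volume s) := by
        rw [Real.volume_preimage_mul_left (ne_of_gt ha')]
    _ = (M * ENNReal.ofReal a'⁻¹) * MeasureTheory.volume s := by
        rw [abs_of_pos (inv_pos.mpr ha'), mul_assoc]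

lemma measurable_tsum_real {Ω : Type*} [m : MeasurableSpace Ω] (g : ℕ → Ω → ℝ)
    (hg : ∀ k, Measurable (g k)) (hsum : ∀ ω, Summable (fun k => g k ω)) :
    Measurable (fun ω => ∑' k, g k ω) := by
  apply measurable_of_tendsto_metrizable (f := fun n ω => ∑ k ∈ Finset.range n, g k ω)
  · exact fun n => Finset.measurable_sum _ (fun k _ => hg k)
  · rw [tendsto_pi_nhds]
    exact fun ω => (hsum ω).hasSum.tendsto_sum_nat

lemma vseq_ge_one (n : ℕ → ℕ) (hn : ∀ k, 1 ≤ k → 2 ≤ n k) (N : ℕ) : 1 ≤ vseq n N := by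
  induction N with
  | zero => simp [vseq]
  | succ m ih =>
      have h2 : 2 ≤ n (m + 1) := hn (m+1) (by omega)
      calc 1 ≤ vseq n m * 1 := by omega
        _ ≤ vseq n m * n (m+1) := by exact Nat.mul_le_mul_left _ (by omega)
        _ = vseq n (m+1) := (Finset.prod_range_succ _ _).symm

lemma vseq_growth (n : ℕ → ℕ) (hn : ∀ k, 1 ≤ k → 2 ≤ n k) (m j : ℕ) :
    vseq n m * 2 ^ j ≤ vseq n (m + j) := by
  induction j with
  | zero => simp
  | succ i ih =>
      have h2 : 2 ≤ n (m + i + 1) := hn _ (by omega)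
      calc vseq n m * 2 ^ (i+1) = (vseq n m * 2 ^ i) * 2 := by ring
        _ ≤ vseq n (m + i) * n (m + i + 1) := Nat.mul_le_mul ih h2
        _ = vseq n (m + (i+1)) := by
              show vseq n (m+i) * n ((m+i) + 1) = _
              rw [show m + (i+1) = (m+i)+1 from by omega]
              exact (Finset.prod_range_succ (fun i => n (i+1)) (m+i)).symm

lemma a_decay (δ κ : ℝ) (hδ : 1 ≤ δ) (hκ : 1 ≤ κ) (n : ℕ → ℕ) (hn : ∀ k, 1 ≤ k → 2 ≤ n k)
    (a : ℕ → ℝ)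
    (ha_low : ∀ k, κ⁻¹ ≤ a k * (vseq n k : ℝ) ^ (δ / 2))
    (ha_up : ∀ k, a k * (vseq n k : ℝ) ^ (δ / 2) ≤ κ)
    (N j : ℕ) :
    a (N + 1 + j) ≤ κ ^ 2 * a (N + 1) * ((Real.sqrt 2)⁻¹) ^ j := by
  have hκ0 : (0:ℝ) < κ := by linarith
  have hv1 : ∀ m, (1:ℝ) ≤ (vseq n m : ℝ) := fun m => by
    exact_mod_cast vseq_ge_one n hn m
  have hv1p : ∀ m, (0:ℝ) < (vseq n m : ℝ) := fun m => lt_of_lt_of_le one_pos (hv1 m)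
  have hrp : ∀ m, (0:ℝ) < ((vseq n m : ℝ)) ^ (δ/2) := fun m => Real.rpow_pos_of_pos (hv1p m) _
  have hrp1 : ∀ m, (1:ℝ) ≤ ((vseq n m : ℝ)) ^ (δ/2) := fun m =>
    Real.one_le_rpow (hv1 m) (by positivity)
  have hsqrt2 : (0:ℝ) < Real.sqrt 2 := Real.sqrt_pos.mpr (by norm_num)
  have hpowj : ∀ j : ℕ, (Real.sqrt 2) ^ j ≤ ((2:ℝ) ^ j) ^ (δ/2) := by
    intro j
    have h1 : (Real.sqrt 2) ^ j = ((2:ℝ) ^ j) ^ ((1:ℝ)/2) := by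
      rw [Real.sqrt_eq_rpow, ← Real.rpow_natCast ((2:ℝ) ^ ((1:ℝ)/2)) j,
        ← Real.rpow_natCast (2:ℝ) j, ← Real.rpow_mul (by norm_num), ← Real.rpow_mul (by norm_num),
        mul_comm]
    rw [h1]
    exact Real.rpow_le_rpow_of_exponent_le (one_le_pow₀ one_le_two) (by linarith)
  have key2 : ((vseq n (N+1) : ℝ)) ^ (δ/2) * (Real.sqrt 2) ^ j
      ≤ ((vseq n (N+1+j) : ℝ)) ^ (δ/2) := by
    have key1 : ((vseq n (N+1) : ℝ)) * 2 ^ j ≤ ((vseq n (N+1+j) : ℝ)) := by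
      exact_mod_cast vseq_growth n hn (N+1) j
    calc ((vseq n (N+1) : ℝ)) ^ (δ/2) * (Real.sqrt 2) ^ j
        ≤ ((vseq n (N+1) : ℝ)) ^ (δ/2) * ((2:ℝ) ^ j) ^ (δ/2) :=
          mul_le_mul_of_nonneg_left (hpowj j) (hrp _).le
      _ = (((vseq n (N+1) : ℝ)) * 2 ^ j) ^ (δ/2) :=
          (Real.mul_rpow (hv1p _).le (by positivity)).symm
      _ ≤ ((vseq n (N+1+j) : ℝ)) ^ (δ/2) :=
          Real.rpow_le_rpow (by positivity) key1 (by positivity)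
  have hup : a (N+1+j) ≤ κ / ((vseq n (N+1+j) : ℝ)) ^ (δ/2) := by
    rw [le_div_iff₀ (hrp _)]
    exact ha_up _
  have hlow : 1 / ((vseq n (N+1) : ℝ)) ^ (δ/2) ≤ κ * a (N+1) := by
    rw [div_le_iff₀ (hrp _)]
    have := ha_low (N+1)
    calc (1:ℝ) = κ * κ⁻¹ := (mul_inv_cancel₀ (ne_of_gt hκ0)).symm
      _ ≤ κ * (a (N+1) * (vseq n (N+1) : ℝ) ^ (δ/2)) := by
          exact mul_le_mul_of_nonneg_left this hκ0.le
      _ = κ * a (N+1) * (vseq n (N+1) : ℝ) ^ (δ/2) := by ring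
  have hsq : (0:ℝ) < (Real.sqrt 2) ^ j := by positivity
  calc a (N+1+j) ≤ κ / ((vseq n (N+1+j) : ℝ)) ^ (δ/2) := hup
    _ ≤ κ / (((vseq n (N+1) : ℝ)) ^ (δ/2) * (Real.sqrt 2) ^ j) := by
        apply div_le_div_of_nonneg_left hκ0.le (mul_pos (hrp _) hsq) key2
    _ = (1 / ((vseq n (N+1) : ℝ)) ^ (δ/2)) * κ * ((Real.sqrt 2)⁻¹) ^ j := by
        rw [inv_pow]
        field_simp
    _ ≤ (κ * a (N+1)) * κ * ((Real.sqrt 2)⁻¹) ^ j := by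
        apply mul_le_mul_of_nonneg_right (mul_le_mul_of_nonneg_right hlow hκ0.le)
        positivity
    _ = κ ^ 2 * a (N+1) * ((Real.sqrt 2)⁻¹) ^ j := by ring

/-- Uniform entropy bound for the tail sums: `sup_{N ≥ 1} D(X_N) < ∞`. -/
theorem entGap_tail_uniform_bound
    {Ω : Type*} [MeasureSpace Ω] [IsProbabilityMeasure (ℙ : Measure Ω)]
    (δ κ : ℝ) (hδ : 1 ≤ δ) (hκ : 1 ≤ κ)
    (n : ℕ → ℕ) (hn : ∀ k, 1 ≤ k → 2 ≤ n k)
    (a : ℕ → ℝ) (ha_pos : ∀ k, 0 < a k) (ha_sum : ∑' k, a k = 1)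
    (ha_low : ∀ k, κ⁻¹ ≤ a k * (vseq n k : ℝ) ^ (δ / 2))
    (ha_up : ∀ k, a k * (vseq n k : ℝ) ^ (δ / 2) ≤ κ)
    (ε : ℕ → ℕ → Ω → ℝ) (με : Measure ℝ) (ϵ : ℝ) (hϵ0 : 0 ≤ ϵ) (hϵ1 : ϵ < 1)
    (hmeas : ∀ k j, Measurable (ε k j))
    (hindep : iIndepFun (fun kj : ℕ × ℕ => ε kj.1 kj.2) ℙ)
    (hlaw : ∀ k j, Measure.map (ε k j) ℙ = με)
    (hsymm : Measure.map (fun x => -x) με = με)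
    (hval : ∀ k j ω, ε k j ω ∈ Set.Icc (-ϵ) ϵ)
    (hdens : ∃ (f : ℝ → ℝ≥0∞) (M : ℝ≥0∞), M ≠ ⊤ ∧ (∀ x, f x ≤ M) ∧
      με = MeasureTheory.volume.withDensity f) :
    ∃ A : ℝ, 0 < A ∧ ∀ N : ℕ, 1 ≤ N →
      entGap (Measure.map (Xtail a ε N) ℙ) ≤ A := by
  obtain ⟨f, M, hMtop, hfM, hμf⟩ := hdens
  have hκ0 : (0:ℝ) < κ := by linarith
  set C₀ : ℝ := max M.toReal 1 with hC₀
  have hC₀1 : 1 ≤ C₀ := le_max_right _ _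
  have hMleC₀ : M ≤ ENNReal.ofReal C₀ := by
    rw [← ENNReal.ofReal_toReal hMtop]
    exact ENNReal.ofReal_le_ofReal (le_max_left _ _)
  set A₀ : ℝ := Real.logb 2 (2 * Real.pi * Real.exp 1 * (4 * κ^2)^2) / 2 + Real.logb 2 C₀
    with hA₀
  refine ⟨max A₀ 1, lt_of_lt_of_le one_pos (le_max_right _ _), ?_⟩
  intro N hN
  -- summability facts
  have hsa : Summable a := by
    by_contra h
    rw [tsum_eq_zero_of_not_summable h] at ha_sum
    norm_num at ha_sum
  have hεbd : ∀ k j ω, |ε k j ω| ≤ 1 := by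
    intro k j ω
    have h := hval k j ω
    rw [Set.mem_Icc] at h
    rw [abs_le]
    constructor <;> linarith [h.1, h.2]
  have htermbd : ∀ (N' k : ℕ) ω, ‖a (N' + k) * ε (N' + k) 0 ω‖ ≤ a (N' + k) := by
    intro N' k ω
    rw [norm_mul, Real.norm_eq_abs, Real.norm_eq_abs, abs_of_pos (ha_pos _)]
    calc a (N'+k) * |ε (N'+k) 0 ω| ≤ a (N'+k) * 1 :=
          mul_le_mul_of_nonneg_left (hεbd _ _ _) (ha_pos _).le
      _ = a (N'+k) := mul_one _
  have hsatail : ∀ N' : ℕ, Summable (fun k => a (N' + k)) := fun N' =>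
    ((summable_nat_add_iff N').2 hsa).congr (fun k => by rw [Nat.add_comm])
  have hsumm : ∀ (N' : ℕ) ω, Summable (fun k => a (N' + k) * ε (N' + k) 0 ω) := by
    intro N' ω
    exact Summable.of_norm_bounded (hsatail N') (fun k => htermbd N' k ω)
  set a' : ℝ := a (N+1) with ha'def
  have ha'0 : 0 < a' := ha_pos _
  set s : ℝ := ∑' k, a (N + 1 + k) with hsdef
  have hsa' : Summable (fun k => a (N + 1 + k)) := hsatail (N+1)
  have hs_nonneg : 0 ≤ s := tsum_nonneg (fun k => (ha_pos _).le)
  have ha'_le_s : a' ≤ s := by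
    have := Summable.le_tsum hsa' 0 (fun j _ => (ha_pos _).le)
    simpa using this
  have hs_le_one : s ≤ 1 := by
    have hpart : ∑ i ∈ Finset.range (N+1), a i + ∑' k, a (k + (N+1)) = ∑' k, a k :=
      Summable.sum_add_tsum_nat_add (N+1) hsa
    have h2 : ∑' k, a (k + (N+1)) = s := tsum_congr (fun k => by rw [Nat.add_comm])
    have h3 : 0 ≤ ∑ i ∈ Finset.range (N+1), a i := Finset.sum_nonneg (fun i _ => (ha_pos i).le)
    rw [h2, ha_sum] at hpart
    linarith
  have ha'_le_one : a' ≤ 1 := le_trans ha'_le_s hs_le_one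
  -- geometric bound s ≤ 4 κ² a'
  have hsqrt2 : (0:ℝ) < Real.sqrt 2 := Real.sqrt_pos.mpr (by norm_num)
  have hsqrt2gt : (1:ℝ) < Real.sqrt 2 := by
    rw [show (1:ℝ) = Real.sqrt 1 from (Real.sqrt_one).symm]
    exact Real.sqrt_lt_sqrt (by norm_num) (by norm_num)
  have hr1 : (Real.sqrt 2)⁻¹ < 1 := by
    rw [inv_lt_one_iff₀]
    right
    exact hsqrt2gt
  have hr0 : (0:ℝ) ≤ (Real.sqrt 2)⁻¹ := by positivity
  have hgeom : Summable (fun j : ℕ => κ^2 * a' * ((Real.sqrt 2)⁻¹) ^ j) :=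
    (summable_geometric_of_lt_one hr0 hr1).mul_left _
  have hs_le : s ≤ 4 * κ^2 * a' := by
    have h1 : s ≤ ∑' j : ℕ, κ^2 * a' * ((Real.sqrt 2)⁻¹)^j :=
      Summable.tsum_le_tsum (fun j => a_decay δ κ hδ hκ n hn a ha_low ha_up N j) hsa' hgeom
    have h2 : ∑' j : ℕ, κ^2 * a' * ((Real.sqrt 2)⁻¹)^j
        = κ^2 * a' * (1 - (Real.sqrt 2)⁻¹)⁻¹ := by
      rw [tsum_mul_left, tsum_geometric_of_lt_one hr0 hr1]
    have hs2 : Real.sqrt 2 ^ 2 = 2 := Real.sq_sqrt (by norm_num)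
    have hinv : (Real.sqrt 2)⁻¹ * Real.sqrt 2 = 1 := inv_mul_cancel₀ (ne_of_gt hsqrt2)
    have h4 : (Real.sqrt 2)⁻¹ ≤ 3/4 := by
      nlinarith [hinv, hs2, hsqrt2, sq_nonneg (Real.sqrt 2 - 4/3)]
    have h3 : (1 - (Real.sqrt 2)⁻¹)⁻¹ ≤ 4 := by
      calc (1 - (Real.sqrt 2)⁻¹)⁻¹ ≤ ((1:ℝ)/4)⁻¹ := by
            apply inv_anti₀ (by norm_num)
            linarith
        _ = 4 := by norm_num
    have h5 : κ^2 * a' * (1 - (Real.sqrt 2)⁻¹)⁻¹ ≤ κ^2 * a' * 4 :=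
      mul_le_mul_of_nonneg_left h3 (by positivity)
    rw [h2] at h1
    nlinarith
  -- decomposition X = Y + R
  set e : Ω → ℝ := ε (N+1) 0 with hedef
  set Y : Ω → ℝ := fun ω => a' * e ω with hYdef
  set R : Ω → ℝ := fun ω => ∑' k, a (N + 2 + k) * ε (N + 2 + k) 0 ω with hRdef
  have hXeq : Xtail a ε N = fun ω => Y ω + R ω := by
    funext ω
    show ∑' k : ℕ, a (N + 1 + k) * ε (N + 1 + k) 0 ω = _
    rw [Summable.tsum_eq_zero_add (hsumm (N+1) ω)]
    congr 1
    exact tsum_congr (fun k => by rw [show N+1+(k+1) = N+2+k from by omega])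
  have hsummR : ∀ ω, Summable (fun k => a (N + 2 + k) * ε (N + 2 + k) 0 ω) := hsumm (N+2)
  have hRm : Measurable R :=
    measurable_tsum_real _ (fun k => (hmeas _ _).const_mul _) hsummR
  have hem : Measurable e := hmeas _ _
  have hYm : Measurable Y := hem.const_mul _
  have hXm : Measurable (Xtail a ε N) := by
    rw [hXeq]
    exact hYm.add hRm
  -- independence
  have hRm₂ : @Measurable Ω ℝ (⨆ i ∈ ({((N+1 : ℕ), (0 : ℕ))}ᶜ : Set (ℕ × ℕ)),
      MeasurableSpace.comap ((fun kj : ℕ × ℕ => ε kj.1 kj.2) i) inferInstance) _ R := by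
    refine @measurable_tsum_real Ω
      (⨆ i ∈ ({((N+1 : ℕ), (0 : ℕ))}ᶜ : Set (ℕ × ℕ)),
        MeasurableSpace.comap ((fun kj : ℕ × ℕ => ε kj.1 kj.2) i) inferInstance) _ ?_ hsummR
    intro k
    have hmem : ((N+2+k : ℕ), (0:ℕ)) ∈ ({((N+1:ℕ),(0:ℕ))}ᶜ : Set (ℕ × ℕ)) := by
      simp only [Set.mem_compl_iff, Set.mem_singleton_iff, Prod.mk.injEq, not_and]
      intro h
      omega
    have hle : MeasurableSpace.comap
        ((fun kj : ℕ × ℕ => ε kj.1 kj.2) ((N+2+k, 0) : ℕ × ℕ)) inferInstance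
        ≤ (⨆ i ∈ ({((N+1 : ℕ), (0 : ℕ))}ᶜ : Set (ℕ × ℕ)),
          MeasurableSpace.comap ((fun kj : ℕ × ℕ => ε kj.1 kj.2) i) inferInstance) :=
      le_biSup (f := fun i : ℕ × ℕ => MeasurableSpace.comap
        ((fun kj : ℕ × ℕ => ε kj.1 kj.2) i) inferInstance) hmem
    have hεm₂ := measurable_iff_comap_le.mpr hle
    exact Measurable.const_mul hεm₂ _
  have hIeR : IndepFun e R ℙ :=
    indepFun_of_measurable_biSup (fun kj : ℕ × ℕ => ε kj.1 kj.2)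
      (fun i => hmeas i.1 i.2) hindep ((N+1 : ℕ), (0 : ℕ)) R hRm₂
  have hIYR : IndepFun Y R ℙ := hIeR.comp (measurable_const_mul a') measurable_id
  -- the law and its density bound
  set ν := Measure.map (Xtail a ε N) ℙ with hν
  haveI hνprob : IsProbabilityMeasure ν := Measure.isProbabilityMeasure_map hXm.aemeasurable
  set c : ℝ≥0∞ := M * ENNReal.ofReal a'⁻¹ with hc
  have hYb : ∀ u : Set ℝ, MeasurableSet u → Measure.map Y ℙ u ≤ c * volume u := fun u hu =>
    map_scaled_density_bound e hem με (hlaw _ _) f M hfM hμf a' ha'0 u hu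
  have hband : ∀ u : Set ℝ, MeasurableSet u → ν u ≤ c * volume u := by
    intro u hu
    rw [hν, hXeq]
    exact map_add_bound Y R hYm hRm hIYR c hYb u hu
  set C : ℝ := C₀ / a' with hC
  have hC₀0 : (0:ℝ) < C₀ := by linarith
  have hC1 : 1 ≤ C := by
    rw [hC, le_div_iff₀ ha'0, one_mul]
    linarith
  have hcC : c ≤ ENNReal.ofReal C := by
    rw [hc, hC, div_eq_mul_inv, ENNReal.ofReal_mul hC₀0.le]
    exact mul_le_mul_left hMleC₀ _
  have hband' : ∀ u : Set ℝ, MeasurableSet u → ν u ≤ ENNReal.ofReal C * volume u :=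
    fun u hu => (hband u hu).trans (mul_le_mul_left hcC _)
  have hac : ν ≪ volume := by
    refine Measure.AbsolutelyContinuous.mk (fun u hu h0 => ?_)
    have h := hband u hu
    rw [h0, mul_zero] at h
    exact le_antisymm h (by positivity)
  have hrn : ν.rnDeriv volume ≤ᵐ[volume] fun _ => ENNReal.ofReal C := by
    have h1 := rnDeriv_le_const_of_bound ν c hband
    filter_upwards [h1] with x hx using hx.trans hcC
  -- support
  have hXbd : ∀ ω, |Xtail a ε N ω| ≤ s := by
    intro ω
    have hnorm : Summable (fun k => ‖a (N+1+k) * ε (N+1+k) 0 ω‖) :=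
      Summable.of_nonneg_of_le (fun k => norm_nonneg _) (fun k => htermbd (N+1) k ω) hsa'
    calc |Xtail a ε N ω| = ‖∑' k : ℕ, a (N+1+k) * ε (N+1+k) 0 ω‖ := rfl
      _ ≤ ∑' k : ℕ, ‖a (N+1+k) * ε (N+1+k) 0 ω‖ := norm_tsum_le_tsum_norm hnorm
      _ ≤ s := Summable.tsum_le_tsum (fun k => htermbd (N+1) k ω) hnorm hsa'
  have hXIcc1 : ∀ ω, Xtail a ε N ω ∈ Set.Icc (-1:ℝ) 1 := by
    intro ω
    have := (abs_le.mp (le_trans (hXbd ω) hs_le_one))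
    exact Set.mem_Icc.mpr this
  have hsupp0 : ν (Set.Icc (-1:ℝ) 1)ᶜ = 0 := by
    rw [hν, Measure.map_apply hXm measurableSet_Icc.compl]
    have hempty : Xtail a ε N ⁻¹' (Set.Icc (-1:ℝ) 1)ᶜ = ∅ := by
      apply Set.eq_empty_iff_forall_notMem.mpr
      intro ω hω
      exact hω (hXIcc1 ω)
    rw [hempty]
    exact measure_empty
  have hae_Icc1 : ∀ᵐ x ∂ν, x ∈ Set.Icc (-1:ℝ) 1 :=
    (ae_map_iff hXm.aemeasurable measurableSet_Icc).mpr (Eventually.of_forall hXIcc1)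
  have hae_Iccs : ∀ᵐ x ∂ν, id x ∈ Set.Icc (-s) s :=
    (ae_map_iff hXm.aemeasurable measurableSet_Icc).mpr
      (Eventually.of_forall (fun ω => Set.mem_Icc.mpr (abs_le.mp (hXbd ω))))
  -- variance bounds
  have hvpos : 0 < variance id ν := variance_id_pos ν C hC1 hband' hae_Icc1
  have hvle : variance id ν ≤ s^2 := by
    have h := variance_le_sq_of_bounded hae_Iccs aemeasurable_id
    calc variance id ν ≤ ((s - -s)/2)^2 := h
      _ = s^2 := by ring
  have hvle2 : variance id ν ≤ (4*κ^2*a')^2 := by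
    refine le_trans hvle ?_
    have : s^2 ≤ (4*κ^2*a')^2 := by nlinarith
    exact this
  -- entropy bound
  have hent : - Real.logb 2 C ≤ diffEnt ν := diffEnt_lower ν C hC1 hac hrn hsupp0
  -- final computation
  have hπ : (0:ℝ) < Real.pi := Real.pi_pos
  have he1 : (0:ℝ) < Real.exp 1 := Real.exp_pos 1
  have hlog1 : Real.logb 2 (2*Real.pi*Real.exp 1 * variance id ν)
      ≤ Real.logb 2 (2*Real.pi*Real.exp 1 * (4*κ^2*a')^2) := by
    apply Real.logb_le_logb_of_le one_lt_two (by positivity)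
    exact mul_le_mul_of_nonneg_left hvle2 (by positivity)
  have hsplit : Real.logb 2 (2*Real.pi*Real.exp 1 * (4*κ^2*a')^2)
      = Real.logb 2 (2*Real.pi*Real.exp 1*(4*κ^2)^2) + 2 * Real.logb 2 a' := by
    have h1 : 2*Real.pi*Real.exp 1 * (4*κ^2*a')^2
        = (2*Real.pi*Real.exp 1*(4*κ^2)^2) * a'^2 := by ring
    rw [h1, Real.logb_mul (by positivity) (by positivity), Real.logb_pow]
    norm_num
  have hCeq : Real.logb 2 C = Real.logb 2 C₀ - Real.logb 2 a' :=
    Real.logb_div (ne_of_gt hC₀0) (ne_of_gt ha'0)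
  have hfinal : entGap ν ≤ A₀ := by
    rw [entGap]
    have h1 : Real.logb 2 (2 * Real.pi * Real.exp 1 * variance id ν) / 2 - diffEnt ν
        ≤ (Real.logb 2 (2*Real.pi*Real.exp 1*(4*κ^2)^2) + 2 * Real.logb 2 a')/2
          + (Real.logb 2 C₀ - Real.logb 2 a') := by
      have := hent
      have := hlog1
      rw [hsplit] at hlog1
      rw [hCeq] at hent
      linarith
    rw [hA₀]
    linarith
  exact le_trans hfinal (le_max_left _ _)
end

section
/- (Lyapunov ratio bound for δ = 1.) In the model below with δ = 1, fix s > 2 and set Y_k = (a_k v_k/v_N) Σ_{j=0}^{v_N/v_k − 1} ε_{k,j} for 0 ≤ k ≤ N, Y_{N+1} = X_N = Σ_{k=N+1}^{∞} a_k ε_{k,0}, B_{N+1} = Σ_{k=0}^{N+1} Var(Y_k), and L_s(N) = (Σ_{k=0}^{N+1} E|Y_k|^s)/B_{N+1}^{s/2}. Then there exists a constant C > 0, independent of N, such that L_s(N) ≤ C · N^{1 − s/2} for all large N. -/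
open MeasureTheory ProbabilityTheory Filter Real
open scoped ENNReal NNReal

/-- `Y_k = (a_k v_k/v_N) Σ_{j=0}^{v_N/v_k − 1} ε_{k,j}` for `0 ≤ k ≤ N`. -/
noncomputable def Ymain {Ω : Type*} (a : ℕ → ℝ) (n : ℕ → ℕ)
    (ε : ℕ → ℕ → Ω → ℝ) (N k : ℕ) (ω : Ω) : ℝ :=
  a k * (vseq n k : ℝ) / (vseq n N : ℝ) *
    ∑ j ∈ Finset.range (vseq n N / vseq n k), ε k j ω

lemma iIndepFun_comp_of_injective {ι ι' Ω : Type*} [MeasurableSpace Ω] {μ : Measure Ω}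
    {f : ι → Ω → ℝ} (h : iIndepFun f μ)
    {u : ι' → ι} (hu : Function.Injective u) :
    iIndepFun (fun i => f (u i)) μ := by
  classical
  rw [iIndepFun_iff_measure_inter_preimage_eq_mul] at h ⊢
  intro S sets hsets
  set g : ι → Set ℝ := fun i => ⋂ i' ∈ S.filter (fun i' => u i' = i), sets i' with hgdef
  have hfil : ∀ i' ∈ S, S.filter (fun j => u j = u i') = {i'} := by
    intro i' hi'
    ext j
    simp only [Finset.mem_filter, Finset.mem_singleton]
    constructor
    · rintro ⟨hj, hju⟩; exact hu hju
    · rintro rfl; exact ⟨hi', rfl⟩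
  have hg : ∀ i' ∈ S, g (u i') = sets i' := by
    intro i' hi'
    rw [hgdef]
    simp only
    rw [hfil i' hi']
    simp
  have hmg : ∀ i ∈ S.image u, MeasurableSet (g i) := by
    intro i _
    exact MeasurableSet.biInter (Finset.countable_toSet _)
      (fun i' hi' => hsets i' (Finset.mem_filter.mp hi').1)
  have key := h (S.image u) hmg
  have e1 : ⋂ i ∈ S.image u, f i ⁻¹' g i = ⋂ i' ∈ S, f (u i') ⁻¹' sets i' := by
    rw [Finset.set_biInter_finset_image]
    exact Set.iInter₂_congr fun i' hi' => by rw [hg i' hi']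
  have e2 : ∏ i ∈ S.image u, μ (f i ⁻¹' g i) = ∏ i' ∈ S, μ (f (u i') ⁻¹' sets i') := by
    rw [Finset.prod_image (fun x _ y _ hxy => hu hxy)]
    exact Finset.prod_congr rfl fun i' hi' => by rw [hg i' hi']
  rw [e1, e2] at key
  exact key

lemma mgf_le_exp_half {Ω : Type*} [MeasurableSpace Ω] {μ : Measure Ω} [IsProbabilityMeasure μ]
    {X : Ω → ℝ} (hX : Measurable X) {ϵ : ℝ} (hϵ : 0 ≤ ϵ)
    (hsymm : Measure.map (fun x => -x) (μ.map X) = μ.map X)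
    (hval : ∀ ω, |X ω| ≤ ϵ) (t : ℝ) :
    mgf X μ t ≤ Real.exp (t^2 * ϵ^2 / 2) := by
  set ν := μ.map X with hν
  haveI : IsProbabilityMeasure ν := Measure.isProbabilityMeasure_map hX.aemeasurable
  have hmexp : ∀ u : ℝ, Measurable fun x : ℝ => Real.exp (u * x) :=
    fun u => (measurable_const.mul measurable_id).exp
  have hmgf : mgf X μ t = ∫ x, Real.exp (t * x) ∂ν :=
    (integral_map hX.aemeasurable (hmexp t).aestronglyMeasurable).symm
  have hae : ∀ᵐ x ∂ν, |x| ≤ ϵ := by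
    rw [hν, ae_map_iff hX.aemeasurable (measurableSet_le measurable_abs measurable_const)]
    exact Eventually.of_forall hval
  have hint : ∀ u : ℝ, Integrable (fun x => Real.exp (u * x)) ν := by
    intro u
    refine Integrable.mono' (integrable_const (Real.exp (|u| * ϵ)))
      (hmexp u).aestronglyMeasurable ?_
    filter_upwards [hae] with x hx
    rw [Real.norm_eq_abs, abs_of_nonneg (Real.exp_nonneg _), Real.exp_le_exp]
    calc u * x ≤ |u * x| := le_abs_self _
      _ = |u| * |x| := abs_mul _ _
      _ ≤ |u| * ϵ := by gcongr
  have hneg : ∫ x, Real.exp (t * x) ∂ν = ∫ x, Real.exp (-(t * x)) ∂ν := by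
    conv_lhs => rw [← hsymm]
    rw [integral_map measurable_neg.aemeasurable (hmexp t).aestronglyMeasurable]
    simp [mul_neg]
  have hcosh : (fun x : ℝ => Real.cosh (t * x))
      = fun x => (Real.exp (t * x) + Real.exp (-(t * x))) / 2 :=
    funext fun x => Real.cosh_eq _
  have key : mgf X μ t = ∫ x, Real.cosh (t * x) ∂ν := by
    rw [hmgf, hcosh, integral_div, integral_add (hint t) ((hint (-t)).congr ?_), ← hneg]
    · ring
    · exact Eventually.of_forall fun x => by simp [neg_mul]
  have hintcosh : Integrable (fun x => Real.cosh (t * x)) ν := by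
    rw [hcosh]
    exact ((hint t).add ((hint (-t)).congr (Eventually.of_forall fun x => by simp [neg_mul]))).div_const 2
  calc mgf X μ t = ∫ x, Real.cosh (t * x) ∂ν := key
    _ ≤ ∫ _, Real.cosh (t * ϵ) ∂ν := by
        refine integral_mono_ae hintcosh (integrable_const _) ?_
        filter_upwards [hae] with x hx
        rw [Real.cosh_le_cosh, abs_mul, abs_mul, abs_of_nonneg hϵ]
        gcongr
    _ = Real.cosh (t * ϵ) := by simp
    _ ≤ Real.exp ((t * ϵ) ^ 2 / 2) := Real.cosh_le_exp_half_sq _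
    _ = Real.exp (t ^ 2 * ϵ ^ 2 / 2) := by rw [mul_pow]

lemma abs_rpow_le_exp_pair {s lam : ℝ} (hs : 0 < s) (hl : 0 < lam) (x : ℝ) :
    |x| ^ s ≤ (s / (lam * Real.exp 1)) ^ s * (Real.exp (lam * x) + Real.exp (-(lam * x))) := by
  have hbase : 0 < s / (lam * Real.exp 1) := by positivity
  have hkey : |x| ^ s ≤ (s / (lam * Real.exp 1)) ^ s * Real.exp (lam * |x|) := by
    rcases eq_or_lt_of_le (abs_nonneg x) with h0 | hpos
    · rw [← h0, Real.zero_rpow hs.ne']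
      positivity
    · set y := |x| with hy
      have h1 : Real.log (lam * y / s) ≤ lam * y / s - 1 :=
        Real.log_le_sub_one_of_pos (by positivity)
      have h2 : Real.log (lam * y / s) = Real.log lam + Real.log y - Real.log s := by
        rw [Real.log_div (by positivity) hs.ne', Real.log_mul hl.ne' hpos.ne']
      have h3 : s * Real.log y ≤ s * (Real.log s - Real.log lam - 1) + lam * y := by
        have h4 : Real.log y ≤ Real.log s - Real.log lam - 1 + lam * y / s := by
          rw [h2] at h1; linarith
        have h5 := mul_le_mul_of_nonneg_left h4 hs.le
        have : s * (Real.log s - Real.log lam - 1 + lam * y / s)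
            = s * (Real.log s - Real.log lam - 1) + lam * y := by
          field_simp
        linarith [h5, this.le]
      have hlog : Real.log (s / (lam * Real.exp 1)) = Real.log s - Real.log lam - 1 := by
        rw [Real.log_div hs.ne' (by positivity), Real.log_mul hl.ne' (Real.exp_ne_zero 1),
          Real.log_exp]
        ring
      rw [Real.rpow_def_of_pos hpos, Real.rpow_def_of_pos hbase, ← Real.exp_add, hlog,
        Real.exp_le_exp]
      nlinarith [h3]
  refine hkey.trans ?_
  have : Real.exp (lam * |x|) ≤ Real.exp (lam * x) + Real.exp (-(lam * x)) := by
    rcases abs_cases x with ⟨h, _⟩ | ⟨h, _⟩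
    · rw [h]; nlinarith [Real.exp_pos (-(lam * x))]
    · rw [h, mul_neg, ← neg_mul]
      nlinarith [Real.exp_pos (lam * x)]
  calc (s / (lam * Real.exp 1)) ^ s * Real.exp (lam * |x|)
      ≤ (s / (lam * Real.exp 1)) ^ s * (Real.exp (lam * x) + Real.exp (-(lam * x))) := by
        apply mul_le_mul_of_nonneg_left this (Real.rpow_nonneg hbase.le s)
    _ = _ := rfl

lemma integral_abs_rpow_le_mgf {Ω : Type*} [MeasurableSpace Ω] {μ : Measure Ω}
    [IsProbabilityMeasure μ] {S : Ω → ℝ} (hS : Measurable S) {R : ℝ} (hR : ∀ ω, |S ω| ≤ R)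
    {s lam : ℝ} (hs : 0 < s) (hl : 0 < lam) :
    ∫ ω, |S ω| ^ s ∂μ ≤ (s / (lam * Real.exp 1)) ^ s * (mgf S μ lam + mgf S μ (-lam)) := by
  have hexp_int : ∀ u : ℝ, Integrable (fun ω => Real.exp (u * S ω)) μ := by
    intro u
    refine Integrable.mono' (integrable_const (Real.exp (|u| * R)))
      ((measurable_const.mul hS).exp).aestronglyMeasurable ?_
    refine Eventually.of_forall fun ω => ?_
    rw [Real.norm_eq_abs, abs_of_nonneg (Real.exp_nonneg _), Real.exp_le_exp]
    calc u * S ω ≤ |u * S ω| := le_abs_self _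
      _ = |u| * |S ω| := abs_mul _ _
      _ ≤ |u| * R := by
          refine mul_le_mul_of_nonneg_left (hR ω) (abs_nonneg u)
  have hlhs_int : Integrable (fun ω => |S ω| ^ s) μ := by
    refine Integrable.mono' (integrable_const ((max R 0) ^ s))
      (((Real.continuous_rpow_const hs.le).measurable).comp hS.abs).aestronglyMeasurable ?_
    refine Eventually.of_forall fun ω => ?_
    rw [Real.norm_eq_abs, abs_of_nonneg (Real.rpow_nonneg (abs_nonneg _) _)]
    exact Real.rpow_le_rpow (abs_nonneg _) ((hR ω).trans (le_max_left _ _)) hs.le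
  have hrhs_int : Integrable
      (fun ω => (s / (lam * Real.exp 1)) ^ s *
        (Real.exp (lam * S ω) + Real.exp (-(lam * S ω)))) μ := by
    refine Integrable.const_mul ?_ _
    exact (hexp_int lam).add ((hexp_int (-lam)).congr (Eventually.of_forall fun ω => by
      simp [neg_mul]))
  calc ∫ ω, |S ω| ^ s ∂μ
      ≤ ∫ ω, (s / (lam * Real.exp 1)) ^ s *
          (Real.exp (lam * S ω) + Real.exp (-(lam * S ω))) ∂μ :=
        integral_mono hlhs_int hrhs_int fun ω => abs_rpow_le_exp_pair hs hl (S ω)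
    _ = (s / (lam * Real.exp 1)) ^ s * (mgf S μ lam + mgf S μ (-lam)) := by
        rw [integral_const_mul, integral_add (hexp_int lam) ((hexp_int (-lam)).congr
          (Eventually.of_forall fun ω => by simp [neg_mul]))]
        congr 1
        rw [mgf, mgf]
        congr 1
        exact integral_congr_ae (Eventually.of_forall fun ω => by simp [neg_mul])

lemma integral_abs_rpow_sum_le {Ω : Type*} [MeasurableSpace Ω] {μ : Measure Ω}
    [IsProbabilityMeasure μ]
    {Y : ℕ → Ω → ℝ} (hind : iIndepFun Y μ)
    (hYm : ∀ j, Measurable (Y j)) {ϵ : ℝ} (hϵ : 0 < ϵ)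
    (hmgf : ∀ j t, mgf (Y j) μ t ≤ Real.exp (t ^ 2 * ϵ ^ 2 / 2))
    (hYb : ∀ j ω, |Y j ω| ≤ ϵ) {s : ℝ} (hs : 0 < s) (m : ℕ) (hm : 1 ≤ m) :
    ∫ ω, |∑ j ∈ Finset.range m, Y j ω| ^ s ∂μ
      ≤ 2 * Real.exp (1 / 2 : ℝ) * (s * ϵ) ^ s * (m : ℝ) ^ (s / 2) := by
  have hm0 : (0 : ℝ) < m := by exact_mod_cast hm
  set q : ℝ := (m : ℝ) ^ ((1 : ℝ) / 2) with hq
  have hq0 : 0 < q := Real.rpow_pos_of_pos hm0 _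
  have hsq : q ^ 2 = (m : ℝ) := by
    rw [hq, ← Real.rpow_natCast ((m : ℝ) ^ ((1 : ℝ) / 2)) 2, ← Real.rpow_mul hm0.le]
    norm_num
  set lam : ℝ := (ϵ * q)⁻¹ with hlam
  have hl : 0 < lam := by positivity
  set S : Ω → ℝ := fun ω => ∑ j ∈ Finset.range m, Y j ω with hSdef
  have hSfun : (∑ j ∈ Finset.range m, Y j) = S := by
    funext ω; rw [hSdef]; simp [Finset.sum_apply]
  have hSm : Measurable S := by
    rw [hSdef]; exact Finset.measurable_sum _ fun j _ => hYm j
  have hSb : ∀ ω, |S ω| ≤ (m : ℝ) * ϵ := by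
    intro ω
    calc |S ω| ≤ ∑ j ∈ Finset.range m, |Y j ω| := Finset.abs_sum_le_sum_abs _ _
      _ ≤ ∑ _j ∈ Finset.range m, ϵ := Finset.sum_le_sum fun j _ => hYb j ω
      _ = (m : ℝ) * ϵ := by rw [Finset.sum_const, Finset.card_range, nsmul_eq_mul]
  have hmgfS : ∀ t : ℝ, mgf S μ t ≤ Real.exp ((m : ℝ) * (t ^ 2 * ϵ ^ 2 / 2)) := by
    intro t
    rw [← hSfun, hind.mgf_sum hYm]
    calc ∏ j ∈ Finset.range m, mgf (Y j) μ t
        ≤ ∏ _j ∈ Finset.range m, Real.exp (t ^ 2 * ϵ ^ 2 / 2) :=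
          Finset.prod_le_prod (fun j _ => mgf_nonneg) (fun j _ => hmgf j t)
      _ = Real.exp (t ^ 2 * ϵ ^ 2 / 2) ^ m := by
          rw [Finset.prod_const, Finset.card_range]
      _ = Real.exp ((m : ℝ) * (t ^ 2 * ϵ ^ 2 / 2)) := by
          rw [← Real.exp_nat_mul]
  have hlamsq : lam ^ 2 = (ϵ ^ 2 * (m : ℝ))⁻¹ := by
    rw [hlam, inv_pow, mul_pow, hsq]
  have hval : (m : ℝ) * (lam ^ 2 * ϵ ^ 2 / 2) = 1 / 2 := by
    rw [hlamsq]
    field_simp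
  have hmgf1 : mgf S μ lam + mgf S μ (-lam) ≤ 2 * Real.exp (1 / 2 : ℝ) := by
    have h1 := hmgfS lam
    have h2 := hmgfS (-lam)
    rw [hval] at h1
    rw [neg_sq, hval] at h2
    linarith
  have hbound := integral_abs_rpow_le_mgf (μ := μ) hSm hSb hs hl
  have hfrac : s / (lam * Real.exp 1) ≤ s * ϵ * q := by
    have h1 : (1 : ℝ) ≤ Real.exp 1 := by
      have := Real.add_one_le_exp 1; linarith
    rw [hlam, inv_mul_eq_div, div_div_eq_mul_div]
    calc s * (ϵ * q) / Real.exp 1 ≤ s * (ϵ * q) := div_le_self (by positivity) h1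
      _ = s * ϵ * q := by ring
  have hpow : (s / (lam * Real.exp 1)) ^ s ≤ (s * ϵ) ^ s * (m : ℝ) ^ (s / 2) := by
    have h1 : (s / (lam * Real.exp 1)) ^ s ≤ (s * ϵ * q) ^ s :=
      Real.rpow_le_rpow (by positivity) hfrac hs.le
    refine h1.trans_eq ?_
    rw [Real.mul_rpow (by positivity) hq0.le, hq, ← Real.rpow_mul hm0.le,
      show (1 : ℝ) / 2 * s = s / 2 by ring]
  calc ∫ ω, |S ω| ^ s ∂μ
      ≤ (s / (lam * Real.exp 1)) ^ s * (mgf S μ lam + mgf S μ (-lam)) := hbound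
    _ ≤ ((s * ϵ) ^ s * (m : ℝ) ^ (s / 2)) * (2 * Real.exp (1 / 2 : ℝ)) := by
        exact mul_le_mul hpow hmgf1 (add_nonneg mgf_nonneg mgf_nonneg) (by positivity)
    _ = 2 * Real.exp (1 / 2 : ℝ) * (s * ϵ) ^ s * (m : ℝ) ^ (s / 2) := by ring

lemma memL2_of_bound {Ω : Type*} [MeasurableSpace Ω] {μ : Measure Ω} [IsProbabilityMeasure μ]
    {X : Ω → ℝ} (hX : Measurable X) {b : ℝ} (hb : ∀ ω, |X ω| ≤ b) : MemLp X 2 μ :=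
  MemLp.mono_exponent (memLp_top_of_bound hX.aestronglyMeasurable b
    (Filter.Eventually.of_forall fun ω => by rw [Real.norm_eq_abs]; exact hb ω))
    le_top

lemma variance_eq_of_map_eq {Ω : Type*} [MeasurableSpace Ω] {μ : Measure Ω}
    [IsProbabilityMeasure μ] {X Y : Ω → ℝ} (hX : Measurable X) (hY : Measurable Y)
    {b : ℝ} (hXb : ∀ ω, |X ω| ≤ b) (hYb : ∀ ω, |Y ω| ≤ b)
    (h : μ.map X = μ.map Y) : variance X μ = variance Y μ := by
  have hmemX := memL2_of_bound (μ := μ) hX hXb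
  have hmemY := memL2_of_bound (μ := μ) hY hYb
  rw [variance_eq_sub hmemX, variance_eq_sub hmemY]
  have hsq : ∫ ω, (X ^ 2) ω ∂μ = ∫ ω, (Y ^ 2) ω ∂μ := by
    simp only [Pi.pow_apply]
    rw [← integral_map hX.aemeasurable (by fun_prop : AEStronglyMeasurable (fun x : ℝ => x ^ 2) _),
      ← integral_map hY.aemeasurable (by fun_prop : AEStronglyMeasurable (fun x : ℝ => x ^ 2) _), h]
  have hmean : ∫ ω, X ω ∂μ = ∫ ω, Y ω ∂μ := by
    have e1 : ∫ ω, X ω ∂μ = ∫ x, x ∂(μ.map X) :=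
      (integral_map hX.aemeasurable measurable_id.aestronglyMeasurable).symm
    have e2 : ∫ ω, Y ω ∂μ = ∫ x, x ∂(μ.map Y) :=
      (integral_map hY.aemeasurable measurable_id.aestronglyMeasurable).symm
    rw [e1, e2, h]
  rw [hsq, hmean]

lemma variance_pos_of_density {Ω : Type*} [MeasurableSpace Ω] {μ : Measure Ω}
    [IsProbabilityMeasure μ] {X : Ω → ℝ} (hX : Measurable X) {b : ℝ} (hb : ∀ ω, |X ω| ≤ b)
    {f : ℝ → ℝ≥0∞} (hf : μ.map X = MeasureTheory.volume.withDensity f) :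
    0 < variance X μ := by
  rcases (variance_nonneg X μ).lt_or_eq with h | h
  · exact h
  exfalso
  have hmem := memL2_of_bound (μ := μ) hX hb
  have hev : evariance X μ = 0 := by
    have hlt := hmem.evariance_lt_top
    have : (evariance X μ).toReal = 0 := h.symm
    exact (ENNReal.toReal_eq_zero_iff _).mp this |>.resolve_right hlt.ne
  have hae : X =ᵐ[μ] fun _ => μ[X] := (evariance_eq_zero_iff hX.aemeasurable).mp hev
  set c : ℝ := μ[X]
  have h1 : μ (X ⁻¹' {c}) = 1 := by
    have h0 : μ {ω | ¬ X ω = c} = 0 := by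
      have := hae
      rw [Filter.EventuallyEq, ae_iff] at this
      exact this
    have hcompl : X ⁻¹' {c} = {ω | ¬ X ω = c}ᶜ := by
      ext ω; simp
    have hms : MeasurableSet {ω | ¬ X ω = c} := by
      have : {ω | ¬ X ω = c} = (X ⁻¹' {c})ᶜ := by ext ω; simp
      rw [this]
      exact (hX (measurableSet_singleton c)).compl
    rw [hcompl, measure_compl hms (by simp), h0]
    simp
  have h2 : (μ.map X) {c} = 1 := by
    rw [Measure.map_apply hX (measurableSet_singleton c)]
    exact h1
  rw [hf, withDensity_apply _ (measurableSet_singleton c),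
    Measure.restrict_eq_zero.mpr Real.volume_singleton, lintegral_zero_measure] at h2
  exact zero_ne_one h2

lemma vseq_pos {n : ℕ → ℕ} (hn : ∀ k, 1 ≤ k → 2 ≤ n k) (N : ℕ) : 0 < vseq n N :=
  Finset.prod_pos fun i _ => by have := hn (i + 1) (by omega); omega

lemma vseq_mul_le {n : ℕ → ℕ} (hn : ∀ k, 1 ≤ k → 2 ≤ n k) (N j : ℕ) :
    vseq n N * 2 ^ j ≤ vseq n (N + j) := by
  simp only [vseq]
  rw [Finset.prod_range_add]
  have : (2 : ℕ) ^ j ≤ ∏ i ∈ Finset.range j, n (N + i + 1) := by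
    calc (2:ℕ) ^ j = ∏ _i ∈ Finset.range j, 2 := by
          rw [Finset.prod_const, Finset.card_range]
      _ ≤ ∏ i ∈ Finset.range j, n (N + i + 1) :=
          Finset.prod_le_prod' fun i _ => hn (N + i + 1) (by omega)
  calc vseq n N * 2 ^ j ≤ vseq n N * ∏ i ∈ Finset.range j, n (N + i + 1) :=
        Nat.mul_le_mul_left _ this
    _ = _ := rfl

lemma vseq_dvd {n : ℕ → ℕ} {k N : ℕ} (h : k ≤ N) : vseq n k ∣ vseq n N := by
  refine ⟨∏ i ∈ Finset.range (N - k), n (k + i + 1), ?_⟩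
  conv_lhs => rw [show N = k + (N - k) by omega]
  simp only [vseq]
  rw [Finset.prod_range_add]

lemma vseq_le {n : ℕ → ℕ} (hn : ∀ k, 1 ≤ k → 2 ≤ n k) {k N : ℕ} (h : k ≤ N) :
    vseq n k ≤ vseq n N :=
  Nat.le_of_dvd (vseq_pos hn N) (vseq_dvd h)

lemma tail_sum_le {n : ℕ → ℕ} (hn : ∀ k, 1 ≤ k → 2 ≤ n k) {a : ℕ → ℝ} (ha : Summable a)
    {κ : ℝ} (hκ0 : 0 ≤ κ)
    (ha_up : ∀ k, a k * ((vseq n k : ℝ)) ^ ((1 : ℝ)/2) ≤ κ) (N : ℕ) :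
    ∑' k, a (N + 1 + k) ≤ 3 * κ / ((vseq n N : ℝ)) ^ ((1 : ℝ)/2) := by
  have hw : (0 : ℝ) < (vseq n N : ℝ) := by exact_mod_cast vseq_pos hn N
  set w : ℝ := ((vseq n N : ℝ)) ^ ((1 : ℝ)/2) with hwdef
  have hw0 : 0 < w := Real.rpow_pos_of_pos hw _
  set r : ℝ := (((2 : ℝ)) ^ ((1 : ℝ)/2))⁻¹ with hrdef
  have h2half : (1 : ℝ) < (2 : ℝ) ^ ((1 : ℝ)/2) := by
    have := Real.rpow_lt_rpow_of_exponent_lt (x := 2) (by norm_num) (by norm_num : (0:ℝ) < 1/2)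
    simpa using this
  have hr0 : 0 < r := by positivity
  have hr1 : r < 1 := by
    rw [hrdef]
    exact inv_lt_one_of_one_lt₀ h2half
  have hr34 : r ≤ 3 / 4 := by
    have h43 : (4 / 3 : ℝ) ≤ (2 : ℝ) ^ ((1 : ℝ)/2) := by
      rw [← Real.sqrt_eq_rpow]
      rw [show (4/3 : ℝ) = Real.sqrt ((4/3)^2) by rw [Real.sqrt_sq (by norm_num)]]
      exact Real.sqrt_le_sqrt (by norm_num)
    calc r ≤ (4 / 3 : ℝ)⁻¹ := by
          rw [hrdef]
          exact inv_anti₀ (by norm_num) h43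
      _ = 3 / 4 := by norm_num
  have hterm : ∀ k : ℕ, a (N + 1 + k) ≤ (κ / w) * r ^ (k + 1) := by
    intro k
    have hwk : (0 : ℝ) < (vseq n (N + 1 + k) : ℝ) := by exact_mod_cast vseq_pos hn _
    have h1 : a (N + 1 + k) ≤ κ / ((vseq n (N + 1 + k) : ℝ)) ^ ((1 : ℝ)/2) := by
      rw [le_div_iff₀ (Real.rpow_pos_of_pos hwk _)]
      exact ha_up _
    have h2 : (vseq n N : ℝ) * 2 ^ (k + 1) ≤ (vseq n (N + 1 + k) : ℝ) := by
      have := vseq_mul_le hn N (k + 1)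
      rw [show N + (k + 1) = N + 1 + k by omega] at this
      exact_mod_cast this
    have h3 : w * ((2 : ℝ) ^ ((1 : ℝ)/2)) ^ (k + 1)
        ≤ ((vseq n (N + 1 + k) : ℝ)) ^ ((1 : ℝ)/2) := by
      have hb : ((vseq n N : ℝ) * 2 ^ (k + 1)) ^ ((1 : ℝ)/2)
          ≤ ((vseq n (N + 1 + k) : ℝ)) ^ ((1 : ℝ)/2) :=
        Real.rpow_le_rpow (by positivity) h2 (by norm_num)
      refine le_trans (le_of_eq ?_) hb
      rw [Real.mul_rpow hw.le (by positivity), hwdef]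
      congr 1
      rw [← Real.rpow_natCast ((2:ℝ) ^ ((1:ℝ)/2)) (k+1), ← Real.rpow_natCast (2:ℝ) (k+1),
        ← Real.rpow_mul (by norm_num : (0:ℝ) ≤ 2), ← Real.rpow_mul (by norm_num : (0:ℝ) ≤ 2),
        mul_comm]
    have h4 : κ / ((vseq n (N + 1 + k) : ℝ)) ^ ((1 : ℝ)/2)
        ≤ κ / (w * ((2 : ℝ) ^ ((1 : ℝ)/2)) ^ (k + 1)) :=
      div_le_div_of_nonneg_left hκ0 (by positivity) h3
    refine h1.trans (h4.trans (le_of_eq ?_))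
    rw [hrdef, inv_pow, div_mul_eq_div_div, div_eq_mul_inv]
  have hsum_shift : Summable fun k => a (N + 1 + k) := by
    have := (summable_nat_add_iff (N + 1)).mpr ha
    refine this.congr fun k => ?_
    congr 1
    omega
  have hsum_geo : Summable fun k : ℕ => (κ / w) * r ^ (k + 1) := by
    have : Summable fun k : ℕ => r ^ k := summable_geometric_of_lt_one hr0.le hr1
    exact ((this.mul_left r).mul_left (κ / w)).congr fun k => by ring
  have htsum : ∑' k, a (N + 1 + k) ≤ ∑' k : ℕ, (κ / w) * r ^ (k + 1) :=
    Summable.tsum_le_tsum hterm hsum_shift hsum_geo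
  have hgeo_val : ∑' k : ℕ, (κ / w) * r ^ (k + 1) = (κ / w) * r * (1 - r)⁻¹ := by
    have h1 : ∑' k : ℕ, (κ / w) * r ^ (k + 1) = ∑' k : ℕ, ((κ / w) * r) * r ^ k := by
      congr 1; funext k; ring
    rw [h1, tsum_mul_left, tsum_geometric_of_lt_one hr0.le hr1]
  have hinv : (1 - r)⁻¹ ≤ 4 := by
    rw [inv_le_comm₀ (by linarith) (by norm_num)]
    linarith
  have hfinal : (κ / w) * r * (1 - r)⁻¹ ≤ 3 * κ / w := by
    have hcw : 0 ≤ κ / w := by positivity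
    have hi0 : 0 ≤ (1 - r)⁻¹ := le_of_lt (inv_pos.mpr (by linarith))
    have : r * (1 - r)⁻¹ ≤ 3 := by nlinarith
    calc (κ / w) * r * (1 - r)⁻¹ = (κ / w) * (r * (1 - r)⁻¹) := by ring
      _ ≤ (κ / w) * 3 := mul_le_mul_of_nonneg_left this hcw
      _ = 3 * κ / w := by ring
  linarith [htsum, hgeo_val.le, hfinal]

set_option maxHeartbeats 2000000 in
/-- Lyapunov ratio bound for `δ = 1`: with `Y_{N+1} = X_N` and
`B_{N+1} = Σ_{k=0}^{N+1} Var(Y_k)`, one has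
`L_s(N) = (Σ_{k=0}^{N+1} E|Y_k|^s)/B_{N+1}^{s/2} ≤ C·N^{1−s/2}` for all large `N`. -/
theorem lyapunov_ratio_delta_one
    {Ω : Type*} [MeasureSpace Ω] [IsProbabilityMeasure (ℙ : Measure Ω)]
    (δ κ : ℝ) (hδ : δ = 1) (hκ : 1 ≤ κ)
    (n : ℕ → ℕ) (hn : ∀ k, 1 ≤ k → 2 ≤ n k)
    (a : ℕ → ℝ) (ha_pos : ∀ k, 0 < a k) (ha_sum : ∑' k, a k = 1)
    (ha_low : ∀ k, κ⁻¹ ≤ a k * (vseq n k : ℝ) ^ (δ / 2))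
    (ha_up : ∀ k, a k * (vseq n k : ℝ) ^ (δ / 2) ≤ κ)
    (ε : ℕ → ℕ → Ω → ℝ) (με : Measure ℝ) (ϵ : ℝ) (hϵ0 : 0 ≤ ϵ) (hϵ1 : ϵ < 1)
    (hmeas : ∀ k j, Measurable (ε k j))
    (hindep : iIndepFun (fun kj : ℕ × ℕ => ε kj.1 kj.2) ℙ)
    (hlaw : ∀ k j, Measure.map (ε k j) ℙ = με)
    (hsymm : Measure.map (fun x => -x) με = με)
    (hval : ∀ k j ω, ε k j ω ∈ Set.Icc (-ϵ) ϵ)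
    (hdens : ∃ (f : ℝ → ℝ≥0∞) (M : ℝ≥0∞), M ≠ ⊤ ∧ (∀ x, f x ≤ M) ∧
      με = MeasureTheory.volume.withDensity f)
    (s : ℝ) (hs : 2 < s) :
    ∃ C : ℝ, 0 < C ∧ ∃ N₀ : ℕ, ∀ N : ℕ, N₀ ≤ N →
      ((∑ k ∈ Finset.range (N + 1), ∫ ω, |Ymain a n ε N k ω| ^ s ∂(ℙ : Measure Ω)) +
          ∫ ω, |Xtail a ε N ω| ^ s ∂(ℙ : Measure Ω)) /
        ((∑ k ∈ Finset.range (N + 1), variance (Ymain a n ε N k) (ℙ : Measure Ω)) +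
            variance (Xtail a ε N) (ℙ : Measure Ω)) ^ (s / 2) ≤
        C * (N : ℝ) ^ (1 - s / 2) := by
  subst hδ
  obtain ⟨f, M, hM, hfM, hμf⟩ := hdens
  have hs0 : (0 : ℝ) < s := by linarith
  have hκ0 : (0 : ℝ) < κ := lt_of_lt_of_le one_pos hκ
  have hsummable : Summable a := by
    by_contra h
    rw [tsum_eq_zero_of_not_summable h] at ha_sum
    norm_num at ha_sum
  have hεb : ∀ k j ω, |ε k j ω| ≤ ϵ := fun k j ω =>
    abs_le.mpr ⟨(hval k j ω).1, (hval k j ω).2⟩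
  set v2 : ℝ := variance (ε 0 0) (ℙ : Measure Ω) with hv2def
  have hv2pos : 0 < v2 :=
    variance_pos_of_density (hmeas 0 0) (hεb 0 0) (by rw [hlaw 0 0]; exact hμf)
  have hϵpos : 0 < ϵ := by
    rcases hϵ0.lt_or_eq with h | h
    · exact h
    · exfalso
      have hz : ε 0 0 = (0 : Ω → ℝ) := funext fun ω => by
        have := hεb 0 0 ω
        rw [← h] at this
        exact abs_nonpos_iff.mp this
      rw [hv2def, hz, variance_zero] at hv2pos
      exact lt_irrefl 0 hv2pos
  have hvar_eq : ∀ k j, variance (ε k j) (ℙ : Measure Ω) = v2 := fun k j =>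
    variance_eq_of_map_eq (hmeas k j) (hmeas 0 0) (hεb k j) (hεb 0 0)
      (by rw [hlaw, hlaw])
  have hmgfε : ∀ k j t, mgf (ε k j) (ℙ : Measure Ω) t ≤ Real.exp (t ^ 2 * ϵ ^ 2 / 2) :=
    fun k j t => mgf_le_exp_half (hmeas k j) hϵ0
      (by rw [hlaw k j]; exact hsymm) (hεb k j) t
  have hindrow : ∀ k, iIndepFun (fun j => ε k j) (ℙ : Measure Ω) :=
    fun k => iIndepFun_comp_of_injective hindep
      (u := fun j => ((k, j) : ℕ × ℕ))
      (fun a b hab => by simpa using congrArg Prod.snd hab)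
  -- constants
  set A₁ : ℝ := 2 * Real.exp (1 / 2 : ℝ) * (s * ϵ) ^ s * κ ^ s with hA₁def
  set A₂ : ℝ := (3 * κ) ^ s with hA₂def
  have hA₁pos : 0 < A₁ := by rw [hA₁def]; positivity
  have hA₂pos : 0 < A₂ := by rw [hA₂def]; positivity
  set d : ℝ := v2 * κ⁻¹ ^ 2 with hddef
  have hdpos : 0 < d := by rw [hddef]; positivity
  set ds : ℝ := d ^ (s / 2) with hdsdef
  have hdspos : 0 < ds := Real.rpow_pos_of_pos hdpos _
  refine ⟨(A₁ + A₂) / ds, by positivity, 1, fun N hN => ?_⟩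
  -- basic quantities
  have hNpos : (0 : ℝ) < N := by exact_mod_cast hN
  set w : ℝ := (vseq n N : ℝ) with hwdef
  have hwpos : 0 < w := by rw [hwdef]; exact_mod_cast vseq_pos hn N
  set q : ℝ := w ^ ((1 : ℝ) / 2) with hqdef
  have hqpos : 0 < q := Real.rpow_pos_of_pos hwpos _
  have hq2 : q ^ 2 = w := by
    rw [hqdef, ← Real.rpow_natCast (w ^ ((1 : ℝ) / 2)) 2, ← Real.rpow_mul hwpos.le]
    norm_num
  set ws : ℝ := w ^ (s / 2) with hwsdef
  have hwspos : 0 < ws := Real.rpow_pos_of_pos hwpos _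
  have hqs : q ^ s = ws := by
    rw [hqdef, hwsdef, ← Real.rpow_mul hwpos.le, show (1 : ℝ) / 2 * s = s / 2 by ring]
  -- per-k quantities and bounds
  have hkey : ∀ k, k ≤ N →
      (∫ ω, |Ymain a n ε N k ω| ^ s ∂(ℙ : Measure Ω)) ≤ A₁ / ws ∧
      d / w ≤ variance (Ymain a n ε N k) (ℙ : Measure Ω) := by
    intro k hk
    set wk : ℝ := (vseq n k : ℝ) with hwkdef
    have hwkpos : 0 < wk := by rw [hwkdef]; exact_mod_cast vseq_pos hn k
    set p : ℝ := wk ^ ((1 : ℝ) / 2) with hpdef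
    have hppos : 0 < p := Real.rpow_pos_of_pos hwkpos _
    have hp2 : p ^ 2 = wk := by
      rw [hpdef, ← Real.rpow_natCast (wk ^ ((1 : ℝ) / 2)) 2, ← Real.rpow_mul hwkpos.le]
      norm_num
    have hdvd : vseq n k ∣ vseq n N := vseq_dvd hk
    set m : ℕ := vseq n N / vseq n k with hmdef
    have hm1 : 1 ≤ m := by
      rw [hmdef]
      rw [Nat.one_le_div_iff (vseq_pos hn k)]
      exact vseq_le hn hk
    have hmcast : (m : ℝ) = w / wk := by
      rw [hmdef, hwdef, hwkdef, Nat.cast_div hdvd (Nat.cast_ne_zero.mpr (vseq_pos hn k).ne')]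
    have hmpos : (0 : ℝ) < (m : ℝ) := by exact_mod_cast hm1
    set c : ℝ := a k * wk / w with hcdef
    have hcpos : 0 < c := by rw [hcdef]; have := ha_pos k; positivity
    have hYfun : Ymain a n ε N k = fun ω => c * ∑ j ∈ Finset.range m, ε k j ω := rfl
    have haup : a k * p ≤ κ := ha_up k
    have halow : κ⁻¹ ≤ a k * p := ha_low k
    -- the key scaling identity
    have hscale : c * (m : ℝ) ^ ((1 : ℝ) / 2) = a k * p / q := by
      have hmr : ((m : ℝ)) ^ ((1 : ℝ) / 2) = q / p := by
        rw [hmcast, Real.div_rpow hwpos.le hwkpos.le, hqdef, hpdef]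
      rw [hmr, hcdef, ← hp2, ← hq2]
      field_simp
    constructor
    · -- moment bound
      have hSmom := integral_abs_rpow_sum_le (μ := (ℙ : Measure Ω)) (hindrow k)
        (fun j => hmeas k j) hϵpos (fun j t => hmgfε k j t) (fun j ω => hεb k j ω) hs0 m hm1
      have hptwise : ∀ ω, |Ymain a n ε N k ω| ^ s
          = c ^ s * |∑ j ∈ Finset.range m, ε k j ω| ^ s := by
        intro ω
        rw [hYfun]
        simp only
        rw [abs_mul, abs_of_pos hcpos, Real.mul_rpow hcpos.le (abs_nonneg _)]
      have hint_eq : (∫ ω, |Ymain a n ε N k ω| ^ s ∂(ℙ : Measure Ω))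
          = c ^ s * ∫ ω, |∑ j ∈ Finset.range m, ε k j ω| ^ s ∂(ℙ : Measure Ω) := by
        simp_rw [hptwise]
        rw [integral_const_mul]
      have hcm : c ^ s * ((m : ℝ)) ^ (s / 2) ≤ κ ^ s / ws := by
        have h1 : c ^ s * ((m : ℝ)) ^ (s / 2) = (c * ((m : ℝ)) ^ ((1 : ℝ) / 2)) ^ s := by
          rw [Real.mul_rpow hcpos.le (Real.rpow_nonneg hmpos.le _),
            ← Real.rpow_mul hmpos.le, show (1 : ℝ) / 2 * s = s / 2 by ring]
        have h2 : c * ((m : ℝ)) ^ ((1 : ℝ) / 2) ≤ κ / q := by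
          rw [hscale]
          gcongr
        rw [h1]
        calc (c * ((m : ℝ)) ^ ((1 : ℝ) / 2)) ^ s ≤ (κ / q) ^ s :=
              Real.rpow_le_rpow (by positivity) h2 hs0.le
          _ = κ ^ s / ws := by rw [Real.div_rpow hκ0.le hqpos.le, hqs]
      rw [hint_eq]
      calc c ^ s * ∫ ω, |∑ j ∈ Finset.range m, ε k j ω| ^ s ∂(ℙ : Measure Ω)
          ≤ c ^ s * (2 * Real.exp (1 / 2 : ℝ) * (s * ϵ) ^ s * (m : ℝ) ^ (s / 2)) :=
            mul_le_mul_of_nonneg_left hSmom (Real.rpow_nonneg hcpos.le _)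
        _ = (2 * Real.exp (1 / 2 : ℝ) * (s * ϵ) ^ s) * (c ^ s * (m : ℝ) ^ (s / 2)) := by ring
        _ ≤ (2 * Real.exp (1 / 2 : ℝ) * (s * ϵ) ^ s) * (κ ^ s / ws) := by
            apply mul_le_mul_of_nonneg_left hcm (by positivity)
        _ = A₁ / ws := by rw [hA₁def]; ring
    · -- variance lower bound
      have hvar : variance (Ymain a n ε N k) (ℙ : Measure Ω) = c ^ 2 * ((m : ℝ) * v2) := by
        rw [hYfun, variance_const_mul]
        congr 1
        have hfun : (fun ω => ∑ j ∈ Finset.range m, ε k j ω)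
            = ∑ j ∈ Finset.range m, ε k j := by
          funext ω
          simp [Finset.sum_apply]
        rw [hfun]
        rw [IndepFun.variance_sum (fun j _ => memL2_of_bound (μ := (ℙ : Measure Ω)) (hmeas k j) (hεb k j))
          (fun i _ j _ hij => hindep.indepFun
            (show ((k, i) : ℕ × ℕ) ≠ (k, j) by simpa using hij))]
        simp [hvar_eq, Finset.sum_const, Finset.card_range, nsmul_eq_mul]
      have hc2m : κ⁻¹ ^ 2 / w ≤ c ^ 2 * (m : ℝ) := by
        have he : c ^ 2 * (m : ℝ) = a k ^ 2 * wk / w := by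
          rw [hcdef, hmcast]
          field_simp
        have hlow2 : κ⁻¹ ^ 2 ≤ a k ^ 2 * wk := by
          have h0 : (0 : ℝ) ≤ κ⁻¹ := by positivity
          calc κ⁻¹ ^ 2 ≤ (a k * p) ^ 2 := pow_le_pow_left₀ h0 halow 2
            _ = a k ^ 2 * wk := by rw [mul_pow, hp2]
        rw [he]
        gcongr
      rw [hvar]
      calc d / w = κ⁻¹ ^ 2 / w * v2 := by rw [hddef]; ring
        _ ≤ c ^ 2 * (m : ℝ) * v2 := mul_le_mul_of_nonneg_right hc2m hv2pos.le
        _ = c ^ 2 * ((m : ℝ) * v2) := by ring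
  -- numerator bound
  have hnum1 : (∑ k ∈ Finset.range (N + 1), ∫ ω, |Ymain a n ε N k ω| ^ s ∂(ℙ : Measure Ω))
      ≤ (N + 1 : ℝ) * (A₁ / ws) := by
    calc (∑ k ∈ Finset.range (N + 1), ∫ ω, |Ymain a n ε N k ω| ^ s ∂(ℙ : Measure Ω))
        ≤ ∑ _k ∈ Finset.range (N + 1), A₁ / ws :=
          Finset.sum_le_sum fun k hk => (hkey k (by
            have := Finset.mem_range.mp hk; omega)).1
      _ = (N + 1 : ℝ) * (A₁ / ws) := by
          rw [Finset.sum_const, Finset.card_range, nsmul_eq_mul]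
          push_cast
          ring
  -- tail moment bound
  have hT : (∑' k, a (N + 1 + k)) ≤ 3 * κ / q :=
    tail_sum_le hn hsummable hκ0.le (fun k => ha_up k) N
  have hshift : Summable fun k => a (N + 1 + k) := by
    have := (summable_nat_add_iff (N + 1)).mpr hsummable
    refine this.congr fun k => ?_
    congr 1
    omega
  have hXb : ∀ ω, |Xtail a ε N ω| ≤ 3 * κ / q := by
    intro ω
    have habs : ∀ k, |a (N + 1 + k) * ε (N + 1 + k) 0 ω| ≤ a (N + 1 + k) := by
      intro k
      rw [abs_mul, abs_of_pos (ha_pos _)]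
      calc a (N + 1 + k) * |ε (N + 1 + k) 0 ω| ≤ a (N + 1 + k) * 1 := by
            apply mul_le_mul_of_nonneg_left _ (ha_pos _).le
            exact (hεb _ _ ω).trans hϵ1.le
        _ = a (N + 1 + k) := mul_one _
    have hsabs : Summable fun k => |a (N + 1 + k) * ε (N + 1 + k) 0 ω| :=
      Summable.of_nonneg_of_le (fun k => abs_nonneg _) habs hshift
    have hsx : Summable fun k => a (N + 1 + k) * ε (N + 1 + k) 0 ω := hsabs.of_abs
    calc |Xtail a ε N ω| ≤ ∑' k, |a (N + 1 + k) * ε (N + 1 + k) 0 ω| := by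
          rw [Xtail]
          exact norm_tsum_le_tsum_norm (f := fun k => a (N + 1 + k) * ε (N + 1 + k) 0 ω) hsabs
      _ ≤ ∑' k, a (N + 1 + k) := Summable.tsum_le_tsum habs hsabs hshift
      _ ≤ 3 * κ / q := hT
  have hnum2 : (∫ ω, |Xtail a ε N ω| ^ s ∂(ℙ : Measure Ω)) ≤ A₂ / ws := by
    have hptb : ∀ ω, |Xtail a ε N ω| ^ s ≤ A₂ / ws := by
      intro ω
      calc |Xtail a ε N ω| ^ s ≤ (3 * κ / q) ^ s :=
            Real.rpow_le_rpow (abs_nonneg _) (hXb ω) hs0.le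
        _ = A₂ / ws := by rw [hA₂def, Real.div_rpow (by positivity) hqpos.le, hqs]
    by_cases hInt : Integrable (fun ω => |Xtail a ε N ω| ^ s) (ℙ : Measure Ω)
    · calc (∫ ω, |Xtail a ε N ω| ^ s ∂(ℙ : Measure Ω))
          ≤ ∫ _ω, A₂ / ws ∂(ℙ : Measure Ω) :=
            integral_mono hInt (integrable_const _) hptb
        _ = A₂ / ws := by simp
    · rw [integral_undef hInt]
      positivity
  -- denominator bound
  have hden : (N + 1 : ℝ) * (d / w)
      ≤ (∑ k ∈ Finset.range (N + 1), variance (Ymain a n ε N k) (ℙ : Measure Ω)) +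
        variance (Xtail a ε N) (ℙ : Measure Ω) := by
    have h1 : (N + 1 : ℝ) * (d / w)
        ≤ ∑ k ∈ Finset.range (N + 1), variance (Ymain a n ε N k) (ℙ : Measure Ω) := by
      calc (N + 1 : ℝ) * (d / w) = ∑ _k ∈ Finset.range (N + 1), d / w := by
            rw [Finset.sum_const, Finset.card_range, nsmul_eq_mul]
            push_cast
            ring
        _ ≤ _ := Finset.sum_le_sum fun k hk => (hkey k (by
            have := Finset.mem_range.mp hk; omega)).2
    linarith [variance_nonneg (Xtail a ε N) (ℙ : Measure Ω)]
  have hdenpos : (0 : ℝ) < (N + 1 : ℝ) * (d / w) := by positivity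
  set B : ℝ := (∑ k ∈ Finset.range (N + 1), variance (Ymain a n ε N k) (ℙ : Measure Ω)) +
      variance (Xtail a ε N) (ℙ : Measure Ω) with hBdef
  have hBpos : 0 < B := lt_of_lt_of_le hdenpos hden
  have hBrpow : ((N + 1 : ℝ)) ^ (s / 2) * ds / ws ≤ B ^ (s / 2) := by
    have h1 : ((N + 1 : ℝ) * (d / w)) ^ (s / 2) ≤ B ^ (s / 2) :=
      Real.rpow_le_rpow hdenpos.le hden (by positivity)
    refine le_trans (le_of_eq ?_) h1
    rw [Real.mul_rpow (by positivity) (by positivity),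
      Real.div_rpow hdpos.le hwpos.le, hdsdef, hwsdef]
    ring
  have hBrpow_pos : (0 : ℝ) < ((N + 1 : ℝ)) ^ (s / 2) * ds / ws := by positivity
  -- final combination
  have hnum : ((∑ k ∈ Finset.range (N + 1), ∫ ω, |Ymain a n ε N k ω| ^ s ∂(ℙ : Measure Ω)) +
      ∫ ω, |Xtail a ε N ω| ^ s ∂(ℙ : Measure Ω)) ≤ ((N + 1 : ℝ) * A₁ + A₂) / ws := by
    have : (N + 1 : ℝ) * (A₁ / ws) + A₂ / ws = ((N + 1 : ℝ) * A₁ + A₂) / ws := by ring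
    linarith [hnum1, hnum2]
  have hnum_nonneg : (0 : ℝ) ≤ ((N + 1 : ℝ) * A₁ + A₂) / ws := by positivity
  calc ((∑ k ∈ Finset.range (N + 1), ∫ ω, |Ymain a n ε N k ω| ^ s ∂(ℙ : Measure Ω)) +
          ∫ ω, |Xtail a ε N ω| ^ s ∂(ℙ : Measure Ω)) / B ^ (s / 2)
      ≤ (((N + 1 : ℝ) * A₁ + A₂) / ws) / (((N + 1 : ℝ)) ^ (s / 2) * ds / ws) :=
        div_le_div₀ hnum_nonneg hnum hBrpow_pos hBrpow
    _ = ((N + 1 : ℝ) * A₁ + A₂) / (((N + 1 : ℝ)) ^ (s / 2) * ds) := by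
        rw [div_div_eq_mul_div, div_mul_cancel₀ _ hwspos.ne']
    _ ≤ ((N + 1 : ℝ) * (A₁ + A₂)) / (((N + 1 : ℝ)) ^ (s / 2) * ds) := by
        gcongr
        nlinarith [hA₂pos.le]
    _ = (A₁ + A₂) / ds * ((N + 1 : ℝ) / ((N + 1 : ℝ)) ^ (s / 2)) := by ring
    _ = (A₁ + A₂) / ds * ((N + 1 : ℝ)) ^ (1 - s / 2) := by
        rw [Real.rpow_sub (by positivity), Real.rpow_one]
    _ ≤ (A₁ + A₂) / ds * (N : ℝ) ^ (1 - s / 2) := by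
        apply mul_le_mul_of_nonneg_left _ (by positivity)
        exact Real.rpow_le_rpow_of_nonpos hNpos (by linarith) (by linarith)
end
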